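/- The hyperreal field is real closed: in the linearly ordered field ℝ*, every nonnegative element is a square, and every polynomial over ℝ* of odd degree has a root in ℝ*. -/

import Mathlib

open Hyperreal Polynomial Filter

/-- An odd degree real polynomial has a real root. -/
lemma odd_natDegree_real_root (q : Polynomial ℝ) (h : Odd q.natDegree) :
    ∃ t : ℝ, q.eval t = 0 := by
  have hne : q ≠ 0 := by
    rintro rfl; norm_num [natDegree_zero] at h
  have hdeg : 0 < q.degree := by
    have : 0 < q.natDegree := Nat.pos_of_ne_zero (by rintro h0; rw [h0] at h; norm_num at h)
    exact natDegree_pos_iff_degree_pos.mp this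
  have hcont : Continuous fun x => q.eval x := q.continuous
  have hcompdeg : (q.comp (-X : ℝ[X])).natDegree = q.natDegree := by
    rw [natDegree_comp]; simp
  have hcomplc : (q.comp (-X : ℝ[X])).leadingCoeff = -q.leadingCoeff := by
    rw [leadingCoeff_comp (by simp)]
    simp [leadingCoeff_neg, h.neg_one_pow]
  have hcompdeg' : 0 < (q.comp (-X : ℝ[X])).degree := by
    rw [← natDegree_pos_iff_degree_pos, hcompdeg]
    exact natDegree_pos_iff_degree_pos.mpr hdeg
  have hlc := leadingCoeff_ne_zero.mpr hne
  rcases hlc.lt_or_gt with hneg | hpos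
  · have htop : Tendsto (fun x => q.eval x) atTop atBot :=
      q.tendsto_atBot_of_leadingCoeff_nonpos hdeg hneg.le
    have hbot' : Tendsto (fun x => eval x (q.comp (-X : ℝ[X]))) atTop atTop :=
      tendsto_atTop_of_leadingCoeff_nonneg _ hcompdeg' (by rw [hcomplc]; linarith)
    have hbot : Tendsto (fun x => q.eval x) atBot atTop := by
      have := hbot'.comp tendsto_neg_atBot_atTop
      refine this.congr fun x => ?_
      simp [Function.comp, eval_comp]
    obtain ⟨t, ht⟩ := (hcont.surjective' hbot htop) 0
    exact ⟨t, ht⟩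
  · have htop : Tendsto (fun x => q.eval x) atTop atTop :=
      q.tendsto_atTop_of_leadingCoeff_nonneg hdeg hpos.le
    have hbot' : Tendsto (fun x => eval x (q.comp (-X : ℝ[X]))) atTop atBot :=
      tendsto_atBot_of_leadingCoeff_nonpos _ hcompdeg' (by rw [hcomplc]; linarith)
    have hbot : Tendsto (fun x => q.eval x) atBot atBot := by
      have := hbot'.comp tendsto_neg_atBot_atTop
      refine this.congr fun x => ?_
      simp [Function.comp, eval_comp]
    obtain ⟨t, ht⟩ := (hcont.surjective htop hbot) 0
    exact ⟨t, ht⟩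

lemma ofSeq_eq_iff {f g : ℕ → ℝ} :
    ofSeq f = ofSeq g ↔ ∀ᶠ i in (hyperfilter ℕ : Filter ℕ), f i = g i :=
  Filter.Germ.coe_eq

lemma ofSeq_add (f g : ℕ → ℝ) : ofSeq (fun i => f i + g i) = ofSeq f + ofSeq g :=
  rfl

lemma ofSeq_mul (f g : ℕ → ℝ) : ofSeq (fun i => f i * g i) = ofSeq f * ofSeq g :=
  rfl

lemma ofSeq_pow (f : ℕ → ℝ) (k : ℕ) : ofSeq (fun i => f i ^ k) = ofSeq f ^ k := by
  induction k with
  | zero => simp [pow_zero]; rfl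
  | succ m ih => rw [pow_succ, ← ih, ← ofSeq_mul]; rfl

lemma ofSeq_sum (s : Finset ℕ) (F : ℕ → ℕ → ℝ) :
    ofSeq (fun i => ∑ k ∈ s, F k i) = ∑ k ∈ s, ofSeq (F k) := by
  classical
  induction s using Finset.induction with
  | empty => simp; rfl
  | insert _ _ hns ih =>
      rename_i a s'
      have hfe : (fun i => ∑ k ∈ insert a s', F k i) = fun i => F a i + ∑ k ∈ s', F k i := by
        funext i; rw [Finset.sum_insert hns]
      rw [hfe, ofSeq_add, ih, Finset.sum_insert hns]

/-- The hyperreal field is real closed: every nonnegative hyperreal is a square, and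
every polynomial over `ℝ*` of odd degree has a root in `ℝ*`. -/
theorem hyperreal_realClosed :
    (∀ x : ℝ*, 0 ≤ x → ∃ y : ℝ*, y ^ 2 = x) ∧
      (∀ p : Polynomial ℝ*, Odd p.natDegree → ∃ x : ℝ*, p.eval x = 0) := by
  classical
  constructor
  · intro x hx
    obtain ⟨f, rfl⟩ := ofSeq_surjective x
    have hf : ∀ᶠ i in (hyperfilter ℕ : Filter ℕ), 0 ≤ f i := Germ.coe_nonneg.mp hx
    refine ⟨ofSeq (fun i => Real.sqrt (f i)), ?_⟩
    rw [← ofSeq_pow]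
    exact ofSeq_eq_iff.mpr (hf.mono fun i hi => by simp [Real.sq_sqrt hi])
  · intro p hodd
    set n := p.natDegree with hn
    have hp0 : p ≠ 0 := by
      rintro rfl; rw [hn] at hodd; norm_num [natDegree_zero] at hodd
    have hrep : ∀ k : ℕ, ∃ f : ℕ → ℝ, ofSeq f = p.coeff k := fun k =>
      ofSeq_surjective (p.coeff k)
    choose c hc using hrep
    set q : ℕ → Polynomial ℝ := fun i =>
      ∑ k ∈ Finset.range (n + 1), Polynomial.C (c k i) * X ^ k with hq
    have hqcoeff : ∀ i m, m ≤ n → (q i).coeff m = c m i := by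
      intro i m hm
      rw [hq]
      simp only [finset_sum_coeff, coeff_C_mul, coeff_X_pow, mul_ite, mul_one, mul_zero]
      rw [Finset.sum_ite_eq (Finset.range (n + 1)) m (fun k => c k i)]
      simp [Nat.lt_succ_of_le hm]
    have hqdeg : ∀ i, (q i).natDegree ≤ n := by
      intro i
      refine natDegree_sum_le_of_forall_le _ _ fun k hk => ?_
      calc (Polynomial.C (c k i) * X ^ k).natDegree
          ≤ (X ^ k : ℝ[X]).natDegree := natDegree_C_mul_le (c k i) (X ^ k)
        _ = k := natDegree_X_pow k
        _ ≤ n := Nat.lt_succ_iff.mp (Finset.mem_range.mp hk)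
    have hlc : ofSeq (c n) ≠ 0 := by
      rw [hc n]
      exact leadingCoeff_ne_zero.mpr hp0
    have hae : ∀ᶠ i in (hyperfilter ℕ : Filter ℕ), c n i ≠ 0 := by
      rw [Ultrafilter.eventually_not]
      intro hcon
      refine hlc ?_
      show ofSeq (c n) = ofSeq (fun _ => 0)
      exact ofSeq_eq_iff.mpr hcon
    set r : ℕ → ℝ := fun i =>
      if h : ∃ t : ℝ, (q i).eval t = 0 then h.choose else 0 with hr
    have hroot : ∀ᶠ i in (hyperfilter ℕ : Filter ℕ), (q i).eval (r i) = 0 := by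
      refine hae.mono fun i hi => ?_
      have hdeg : (q i).natDegree = n := by
        refine le_antisymm (hqdeg i) (le_natDegree_of_ne_zero ?_)
        rw [hqcoeff i n le_rfl]; exact hi
      have hex : ∃ t : ℝ, (q i).eval t = 0 :=
        odd_natDegree_real_root (q i) (hdeg ▸ hodd)
      rw [hr]; simp only [dif_pos hex]; exact hex.choose_spec
    refine ⟨ofSeq r, ?_⟩
    rw [eval_eq_sum_range]
    calc ∑ k ∈ Finset.range (n + 1), p.coeff k * ofSeq r ^ k
        = ∑ k ∈ Finset.range (n + 1), ofSeq (fun i => c k i * r i ^ k) := by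
          refine Finset.sum_congr rfl fun k _ => ?_
          rw [← hc k, ← ofSeq_pow, ← ofSeq_mul]
      _ = ofSeq (fun i => ∑ k ∈ Finset.range (n + 1), c k i * r i ^ k) :=
          (ofSeq_sum _ _).symm
      _ = 0 := by
          show _ = ofSeq (fun _ => 0)
          refine ofSeq_eq_iff.mpr (hroot.mono fun i hi => ?_)
          have : (q i).eval (r i) = ∑ k ∈ Finset.range (n + 1), c k i * r i ^ k := by
            rw [hq]; simp [eval_finset_sum]
          rw [← this, hi]
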